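/- Let A be SPD, M invertible with M + Mᵀ − A SPD, and M̃ = Mᵀ(M + Mᵀ − A)⁻¹M. Then M̃ is symmetric positive definite and M̃ − A is positive semidefinite (equivalently, vᵀAv ≤ vᵀM̃v for all v). -/

import Mathlib

open Matrix

theorem symmetrized_relaxation_SPD {n : ℕ}
    (A M : Matrix (Fin n) (Fin n) ℝ) (hA : A.PosDef)
    (hM : IsUnit M.det) (hMA : (M + Mᵀ - A).PosDef) :
    (Mᵀ * (M + Mᵀ - A)⁻¹ * M).PosDef ∧
      (Mᵀ * (M + Mᵀ - A)⁻¹ * M - A).PosSemidef := by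
  set N := M + Mᵀ - A with hN
  have hNdet : IsUnit N.det := (Matrix.isUnit_iff_isUnit_det N).mp hMA.isUnit
  have hNinv : N⁻¹.PosDef := hMA.inv
  have hNiT : N⁻¹ᵀ = N⁻¹ := by
    have := hNinv.isHermitian
    simpa [Matrix.IsHermitian, Matrix.conjTranspose_eq_transpose_of_trivial] using this
  have hNmul : N * N⁻¹ = 1 := Matrix.mul_nonsing_inv N hNdet
  have hNmul' : N⁻¹ * N = 1 := Matrix.nonsing_inv_mul N hNdet
  have hMinj : Function.Injective (M.mulVec) :=
    (Matrix.mulVec_injective_iff_isUnit.mpr ((Matrix.isUnit_iff_isUnit_det M).mpr hM))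
  clear_value N
  have hHerm : (Mᵀ * N⁻¹ * M).IsHermitian := by
    have : (Mᵀ * N⁻¹ * M)ᵀ = Mᵀ * N⁻¹ * M := by
      rw [Matrix.transpose_mul, Matrix.transpose_mul, Matrix.transpose_transpose, hNiT,
        Matrix.mul_assoc]
    simpa [Matrix.IsHermitian, Matrix.conjTranspose_eq_transpose_of_trivial] using this
  have hPD : (Mᵀ * N⁻¹ * M).PosDef := by
    refine Matrix.PosDef.of_dotProduct_mulVec_pos hHerm (fun x hx => ?_)
    have hMx : M *ᵥ x ≠ 0 := by
      intro h
      exact hx (hMinj (by simpa using h))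
    have := hNinv.dotProduct_mulVec_pos hMx
    simpa [← Matrix.mulVec_mulVec, Matrix.dotProduct_mulVec, Matrix.vecMul_transpose,
      Matrix.dotProduct_mulVec (M *ᵥ x)] using this
  refine ⟨hPD, ?_⟩
  have key : Mᵀ * N⁻¹ * M - A = (N⁻¹ * M - 1)ᵀ * N * (N⁻¹ * M - 1) := by
    have expand : (N⁻¹ * M - 1)ᵀ * N * (N⁻¹ * M - 1) = Mᵀ * N⁻¹ * M - Mᵀ - M + N := by
      rw [Matrix.transpose_sub, Matrix.transpose_mul, hNiT, Matrix.transpose_one]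
      rw [Matrix.sub_mul, Matrix.sub_mul, Matrix.mul_sub, Matrix.mul_sub]
      rw [Matrix.mul_assoc Mᵀ N⁻¹ N, hNmul', Matrix.mul_one, Matrix.one_mul,
        Matrix.mul_one, Matrix.mul_one]
      have h1 : Mᵀ * (N⁻¹ * M) = Mᵀ * N⁻¹ * M := (Matrix.mul_assoc _ _ _).symm
      have h2 : N * (N⁻¹ * M) = M := by rw [← Matrix.mul_assoc, hNmul, Matrix.one_mul]
      rw [h1, h2]
      abel
    rw [expand, hN]
    abel
  rw [key]
  have hps := hMA.posSemidef.conjTranspose_mul_mul_same (N⁻¹ * M - 1)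
  have hct : (N⁻¹ * M - 1)ᴴ = (N⁻¹ * M - 1)ᵀ :=
    Matrix.conjTranspose_eq_transpose_of_trivial _
  rwa [hct] at hps
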